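/- Let F be a field and let M, N be p×q matrices over F. If M and N have the same null space, i.e., for every x ∈ F^q one has M·x = 0 if and only if N·x = 0, then M and N have the same row space: the span in F^q of the rows of M equals the span of the rows of N. (The null space of a matrix determines its row space; no orthogonality is needed.) -/

import Mathlib

open Matrix

/-- `E.IsPivot i j` : sweeping row `i` of `E` from the left, the first nonzero
entry is met at column `j` (i.e. `E i j ≠ 0` and all entries to its left vanish). -/
def Matrix.IsPivot {F : Type*} [Field F] {p q : ℕ}
    (E : Matrix (Fin p) (Fin q) F) (i : Fin p) (j : Fin q) : Prop :=
  E i j ≠ 0 ∧ ∀ j' : Fin q, j' < j → E i j' = 0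

/-- `E` is in row reduced echelon form:
(1) the first nonzero entry of every nonzero row is `1`;
(2) a pivot is the only nonzero entry of its column;
(3) a pivot in a lower row lies in a column strictly to the right;
(4) zero rows are at the bottom. -/
def Matrix.IsRREF {F : Type*} [Field F] {p q : ℕ}
    (E : Matrix (Fin p) (Fin q) F) : Prop :=
  (∀ i j, E.IsPivot i j → E i j = 1) ∧
  (∀ i j, E.IsPivot i j → ∀ i' : Fin p, i' ≠ i → E i' j = 0) ∧
  (∀ i₁ j₁ i₂ j₂, E.IsPivot i₁ j₁ → E.IsPivot i₂ j₂ → i₁ < i₂ → j₁ < j₂) ∧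
  (∀ i i' : Fin p, i ≤ i' → (∀ j, E i j = 0) → ∀ j, E i' j = 0)

/-- Two `p × q` matrices are row equivalent iff one is obtained from the
other by left multiplication by an invertible `p × p` matrix. -/
def Matrix.RowEquiv {F : Type*} [Field F] {p q : ℕ}
    (M N : Matrix (Fin p) (Fin q) F) : Prop :=
  ∃ P : Matrix (Fin p) (Fin p) F, IsUnit P ∧ N = P * M


lemma rowSpace_finrank_eq_of_ker_eq {F : Type*} [Field F] {p p' q : ℕ}
    (A : Matrix (Fin p) (Fin q) F) (B : Matrix (Fin p') (Fin q) F)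
    (hk : LinearMap.ker A.mulVecLin = LinearMap.ker B.mulVecLin) :
    Module.finrank F (Submodule.span F (Set.range A)) =
      Module.finrank F (Submodule.span F (Set.range B)) := by
  have hA : Submodule.span F (Set.range A) = LinearMap.range Aᵀ.mulVecLin := by
    rw [Matrix.range_mulVecLin]; rfl
  have hB : Submodule.span F (Set.range B) = LinearMap.range Bᵀ.mulVecLin := by
    rw [Matrix.range_mulVecLin]; rfl
  have h1 : Module.finrank F (LinearMap.range Aᵀ.mulVecLin) = Aᵀ.rank := rfl
  have h2 : Module.finrank F (LinearMap.range Bᵀ.mulVecLin) = Bᵀ.rank := rfl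
  rw [hA, hB, h1, h2, Matrix.rank_transpose, Matrix.rank_transpose]
  have rnA := LinearMap.finrank_range_add_finrank_ker A.mulVecLin
  have rnB := LinearMap.finrank_range_add_finrank_ker B.mulVecLin
  rw [hk] at rnA
  unfold Matrix.rank
  omega

lemma mem_rowSpace_of_vanish {F : Type*} [Field F] {p q : ℕ}
    (A : Matrix (Fin p) (Fin q) F) (v : Fin q → F)
    (hv : ∀ x, A.mulVec x = 0 → v ⬝ᵥ x = 0) :
    v ∈ Submodule.span F (Set.range A) := by
  set A' : Matrix (Fin (p+1)) (Fin q) F := (Fin.cons v A : Fin (p+1) → Fin q → F) with hA'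
  have hk : LinearMap.ker A'.mulVecLin = LinearMap.ker A.mulVecLin := by
    ext x
    simp only [LinearMap.mem_ker, Matrix.mulVecLin_apply]
    constructor
    · intro hx
      funext i
      have := congrFun hx i.succ
      exact this
    · intro hx
      funext i
      refine Fin.cases ?_ ?_ i
      · exact hv x hx
      · intro j
        have := congrFun hx j
        exact this
  have hr := rowSpace_finrank_eq_of_ker_eq A A' hk.symm
  have hle : Submodule.span F (Set.range A) ≤ Submodule.span F (Set.range A') := by
    apply Submodule.span_mono
    rintro _ ⟨i, rfl⟩
    exact ⟨i.succ, by rw [hA']; exact Fin.cons_succ ..⟩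
  have heq : Submodule.span F (Set.range A) = Submodule.span F (Set.range A') :=
    Submodule.eq_of_le_of_finrank_eq hle hr
  rw [heq]
  exact Submodule.subset_span ⟨0, by rw [hA']; exact Fin.cons_zero ..⟩


/-- The null space of a matrix determines its row space. -/
theorem rowSpace_eq_of_same_nullspace {F : Type*} [Field F] {p q : ℕ}
    (M N : Matrix (Fin p) (Fin q) F)
    (h : ∀ x : Fin q → F, M.mulVec x = 0 ↔ N.mulVec x = 0) :
    Submodule.span F (Set.range (fun i : Fin p => M i)) =
      Submodule.span F (Set.range (fun i : Fin p => N i)) := by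
  apply le_antisymm <;> rw [Submodule.span_le] <;> rintro _ ⟨i, rfl⟩
  · exact mem_rowSpace_of_vanish N (M i) fun x hx =>
      congrFun ((h x).mpr hx) i
  · exact mem_rowSpace_of_vanish M (N i) fun x hx =>
      congrFun ((h x).mp hx) i
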